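/- Every (F ∩ F')-timed automorphism decomposes as a finite composition π = πₙ ∘ ... ∘ π₁ where each πᵢ is either an F-timed automorphism or an F'-timed automorphism, for any finite F, F' ⊆ [0,1). -/

import Mathlib

/-- A timed automorphism: a monotone bijection `π : ℝ → ℝ` with `π (x+1) = π x + 1`. -/
def IsTimedAutomorphism (π : ℝ → ℝ) : Prop :=
  Function.Bijective π ∧ StrictMono π ∧ ∀ x : ℝ, π (x + 1) = π x + 1

/-- An `S`-timed automorphism: a timed automorphism fixing every point of `S`. -/
def IsSTimedAutomorphism (S : Set ℝ) (π : ℝ → ℝ) : Prop :=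
  IsTimedAutomorphism π ∧ ∀ t ∈ S, π t = t

/-- A timed word: a finite sequence of letters with nonnegative, nondecreasing timestamps. -/
def IsTimedWord {A : Type*} (w : List (A × ℝ)) : Prop :=
  (∀ p ∈ w, 0 ≤ p.2) ∧ (w.map Prod.snd).Chain' (· ≤ ·)

/-- Pointwise action of a real function on the timestamps of a timed word. -/
def mapTW {A : Type*} (π : ℝ → ℝ) (w : List (A × ℝ)) : List (A × ℝ) :=
  w.map fun p => (p.1, π p.2)

namespace TADecomp

open Function Set

lemma auto_id : IsTimedAutomorphism id :=
  ⟨Function.bijective_id, strictMono_id, fun _ => rfl⟩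

lemma auto_comp {σ τ : ℝ → ℝ} (hσ : IsTimedAutomorphism σ) (hτ : IsTimedAutomorphism τ) :
    IsTimedAutomorphism (σ ∘ τ) :=
  ⟨hσ.1.comp hτ.1, hσ.2.1.comp hτ.2.1, fun x => by
    simp only [Function.comp_apply, hτ.2.2, hσ.2.2]⟩

lemma auto_sub_one {σ : ℝ → ℝ} (hσ : IsTimedAutomorphism σ) (z : ℝ) : σ (z - 1) = σ z - 1 := by
  have h := hσ.2.2 (z - 1)
  rw [sub_add_cancel] at h
  linarith

lemma auto_int {σ : ℝ → ℝ} (hσ : IsTimedAutomorphism σ) (x : ℝ) (n : ℤ) :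
    σ (x + n) = σ x + n := by
  induction n using Int.induction_on with
  | zero => simp
  | succ k ih =>
      have h1 := hσ.2.2 (x + (k : ℝ))
      push_cast at ih ⊢
      rw [show x + ((k : ℝ) + 1) = x + (k : ℝ) + 1 by ring, h1, ih]; ring
  | pred k ih =>
      have h1 := auto_sub_one hσ (x + -(k : ℝ))
      push_cast at ih ⊢
      rw [show x + (-(k : ℝ) - 1) = x + -(k : ℝ) - 1 by ring, h1, ih]; ring

lemma auto_invFun {σ : ℝ → ℝ} (hσ : IsTimedAutomorphism σ) :
    IsTimedAutomorphism (Function.invFun σ) := by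
  obtain ⟨⟨hinj, hsurj⟩, hmono, heq⟩ := hσ
  have hli : Function.LeftInverse (invFun σ) σ := Function.leftInverse_invFun hinj
  have hri : Function.RightInverse (invFun σ) σ := Function.rightInverse_invFun hsurj
  refine ⟨⟨hri.injective, hli.surjective⟩, ?_, ?_⟩
  · intro a b hab
    by_contra h
    push_neg at h
    have h2 : σ (invFun σ b) ≤ σ (invFun σ a) := hmono.monotone h
    rw [hri a, hri b] at h2
    linarith
  · intro x
    apply hinj
    rw [hri, heq, hri]

lemma invFun_fix {σ : ℝ → ℝ} (hσ : IsTimedAutomorphism σ) {s : ℝ} (h : σ s = s) :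
    Function.invFun σ s = s := by
  apply hσ.1.1
  rw [Function.rightInverse_invFun hσ.1.2 s, h]

/-! ### folds of lists of functions -/

lemma fold_append (l₁ l₂ : List (ℝ → ℝ)) :
    (l₁ ++ l₂).foldr (· ∘ ·) id = l₁.foldr (· ∘ ·) id ∘ l₂.foldr (· ∘ ·) id := by
  induction l₁ with
  | nil => rfl
  | cons a l ih => simp only [List.cons_append, List.foldr_cons, ih]; rfl

lemma fold_auto (l : List (ℝ → ℝ)) (h : ∀ σ ∈ l, IsTimedAutomorphism σ) :
    IsTimedAutomorphism (l.foldr (· ∘ ·) id) := by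
  induction l with
  | nil => exact auto_id
  | cons a l ih =>
      have : (a :: l).foldr (· ∘ ·) id = a ∘ l.foldr (· ∘ ·) id := rfl
      rw [this]
      exact auto_comp (h a (by simp)) (ih fun σ hσ => h σ (by simp [hσ]))

lemma fold_fixes (S : Set ℝ) (l : List (ℝ → ℝ)) (h : ∀ σ ∈ l, ∀ s ∈ S, σ s = s) :
    ∀ s ∈ S, l.foldr (· ∘ ·) id s = s := by
  induction l with
  | nil => intro s _; rfl
  | cons a l ih =>
      intro s hs
      have h1 := ih (fun σ hσ => h σ (by simp [hσ])) s hs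
      simp only [List.foldr_cons, Function.comp_apply, h1]
      exact h a (by simp) s hs

/-! ### grids -/

def grid (E : Set ℝ) : Set ℝ := {x | ∃ e ∈ E, ∃ n : ℤ, x = e + n}

lemma mem_grid {E : Set ℝ} {e : ℝ} (he : e ∈ E) (n : ℤ) : e + n ∈ grid E :=
  ⟨e, he, n, rfl⟩

lemma subset_grid (E : Set ℝ) : E ⊆ grid E := fun e he => by
  have := mem_grid he 0; simpa using this

lemma grid_mono {E E' : Set ℝ} (h : E ⊆ E') : grid E ⊆ grid E' := by
  rintro x ⟨e, he, n, rfl⟩; exact mem_grid (h he) n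

lemma grid_add_one {E : Set ℝ} {x : ℝ} (h : x ∈ grid E) : x + 1 ∈ grid E := by
  obtain ⟨e, he, n, rfl⟩ := h
  have h2 : e + (n : ℝ) + 1 = e + ((n + 1 : ℤ) : ℝ) := by push_cast; ring
  rw [h2]; exact mem_grid he _

lemma grid_sub_one {E : Set ℝ} {x : ℝ} (h : x ∈ grid E) : x - 1 ∈ grid E := by
  obtain ⟨e, he, n, rfl⟩ := h
  have h2 : e + (n : ℝ) - 1 = e + ((n - 1 : ℤ) : ℝ) := by push_cast; ring
  rw [h2]; exact mem_grid he _

lemma grid_dense {E : Set ℝ} (hne : E.Nonempty) (z : ℝ) :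
    ∃ d ∈ grid E, z - 1 < d ∧ d ≤ z := by
  obtain ⟨e, he⟩ := hne
  refine ⟨e + ⌊z - e⌋, mem_grid he _, ?_, ?_⟩
  · have := Int.sub_one_lt_floor (z - e); linarith
  · have := Int.floor_le (z - e); linarith

lemma grid_finite {E : Set ℝ} (hE : E.Finite) (hsub : E ⊆ Ico (0:ℝ) 1) (a b : ℝ) :
    (grid E ∩ Icc a b).Finite := by
  have hfin : ((fun p : ℝ × ℤ => p.1 + p.2) '' (E ×ˢ (Icc ⌈a - 1⌉ ⌊b⌋ : Set ℤ))).Finite :=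
    Set.Finite.image _ (hE.prod (Set.finite_Icc _ _))
  apply hfin.subset
  rintro x ⟨⟨e, he, n, rfl⟩, hx1, hx2⟩
  refine ⟨⟨e, n⟩, ⟨he, ?_, ?_⟩, rfl⟩
  · rw [Int.ceil_le]
    have := (hsub he).2
    push_cast; linarith
  · rw [Int.le_floor]
    have := (hsub he).1
    push_cast; linarith

lemma grid_eq_cases {X : Set ℝ} (hX : X ⊆ Ico (0:ℝ) 1) {Y : Set ℝ} (hY : Y ⊆ Ico (0:ℝ) 1)
    {e e' : ℝ} (he : e ∈ X) (he' : e' ∈ Y) {n n' : ℤ} (h : e + (n:ℝ) = e' + n') :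
    e = e' ∧ n = n' := by
  have h1 := hX he
  have h2 := hY he'
  simp only [mem_Ico] at h1 h2
  have hc : ((n' - n : ℤ) : ℝ) = e - e' := by push_cast; linarith
  have hn : n' - n = 0 := by
    have hl : (-1 : ℝ) < ((n' - n : ℤ) : ℝ) := by rw [hc]; linarith
    have hr : ((n' - n : ℤ) : ℝ) < 1 := by rw [hc]; linarith
    have hl' : (-1 : ℤ) < n' - n := by exact_mod_cast hl
    have hr' : n' - n < 1 := by exact_mod_cast hr
    omega
  constructor
  · have : ((n' - n : ℤ) : ℝ) = 0 := by rw [hn]; simp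
    rw [this] at hc; linarith
  · omega

lemma grid_inter {X Y : Set ℝ} (hX : X ⊆ Ico (0:ℝ) 1) (hY : Y ⊆ Ico (0:ℝ) 1) :
    grid X ∩ grid Y = grid (X ∩ Y) := by
  ext x
  constructor
  · rintro ⟨⟨e, he, n, rfl⟩, ⟨e', he', n', h'⟩⟩
    obtain ⟨h1, h2⟩ := grid_eq_cases hX hY he he' h'
    exact mem_grid (Set.mem_inter he (h1 ▸ he')) n
  · rintro ⟨e, he, n, rfl⟩
    exact ⟨mem_grid he.1 n, mem_grid he.2 n⟩

lemma not_mem_grid {E : Set ℝ} (hsub : E ⊆ Ico (0:ℝ) 1) {t : ℝ} (ht : t ∈ Ico (0:ℝ) 1)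
    (htE : t ∉ E) : t ∉ grid E := by
  rintro ⟨e, he, n, h⟩
  have : e = t ∧ n = 0 := by
    have := grid_eq_cases hsub (Set.singleton_subset_iff.mpr ht) he (Set.mem_singleton t)
      (n' := 0) (by push_cast; linarith)
    exact this
  exact htE (this.1 ▸ he)

lemma fixes_grid {σ : ℝ → ℝ} (hσ : IsTimedAutomorphism σ) {E : Set ℝ}
    (h : ∀ s ∈ E, σ s = s) : ∀ s ∈ grid E, σ s = s := by
  rintro x ⟨e, he, n, rfl⟩
  rw [auto_int hσ, h e he]

/-! ### GridLike -/

structure GridLike (D : Set ℝ) : Prop where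
  add_one : ∀ x ∈ D, x + 1 ∈ D
  sub_one : ∀ x ∈ D, x - 1 ∈ D
  dense : ∀ z : ℝ, ∃ d ∈ D, z - 1 < d ∧ d ≤ z
  finite : ∀ a b : ℝ, (D ∩ Icc a b).Finite

lemma gridLike_grid {E : Set ℝ} (hE : E.Finite) (hne : E.Nonempty)
    (hsub : E ⊆ Ico (0:ℝ) 1) : GridLike (grid E) :=
  ⟨fun _ h => grid_add_one h, fun _ h => grid_sub_one h, grid_dense hne, grid_finite hE hsub⟩

lemma GridLike.int {D : Set ℝ} (hD : GridLike D) {z : ℝ} (hz : z ∈ D) (n : ℤ) :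
    z + n ∈ D := by
  induction n using Int.induction_on with
  | zero => simpa using hz
  | succ k ih =>
      have h2 : z + (((k : ℤ) + 1 : ℤ) : ℝ) = (z + ((k : ℤ) : ℝ)) + 1 := by push_cast; ring
      rw [h2]
      exact hD.add_one _ ih
  | pred k ih =>
      have h2 : z + ((-(k : ℤ) - 1 : ℤ) : ℝ) = (z + ((-(k : ℤ) : ℤ) : ℝ)) - 1 := by push_cast; ring
      rw [h2]
      exact hD.sub_one _ ih

/-! ### the piecewise linear bump -/

noncomputable def psi (p q r s : ℝ) : ℝ :=
  if s ≤ p then s * (q / p) else if s ≤ r then q + (s - p) * ((r - q) / (r - p)) else s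

section psi

variable {p q r : ℝ} (hp : 0 < p) (hq : 0 < q) (hpr : p < r) (hqr : q < r) (hr1 : r ≤ 1)

include hp hq hpr hqr hr1

set_option linter.unusedSectionVars false

lemma psi_zero : psi p q r 0 = 0 := by
  rw [psi, if_pos hp.le]; ring

lemma psi_p : psi p q r p = q := by
  rw [psi, if_pos le_rfl]; field_simp

lemma psi_ge {s : ℝ} (hs : r ≤ s) : psi p q r s = s := by
  rw [psi, if_neg (by linarith)]
  by_cases h : s ≤ r
  · have hsr : s = r := le_antisymm h hs
    rw [if_pos h, hsr]
    have h1 : r - p ≠ 0 := by linarith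
    field_simp
    ring
  · rw [if_neg h]

lemma psi_nonneg {s : ℝ} (hs : 0 ≤ s) : 0 ≤ psi p q r s := by
  rw [psi]
  split_ifs with h1 h2
  · exact mul_nonneg hs (div_nonneg hq.le hp.le)
  · have e1 : 0 ≤ s - p := by linarith
    have e2 : 0 ≤ (r - q) / (r - p) := div_nonneg (by linarith) (by linarith)
    nlinarith
  · exact hs

lemma psi_lt_one {s : ℝ} (hs0 : 0 ≤ s) (hs1 : s < 1) : psi p q r s < 1 := by
  rw [psi]
  split_ifs with h1 h2
  · have hqp : (0:ℝ) < q / p := div_pos hq hp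
    have e1 : s * (q / p) ≤ p * (q / p) := mul_le_mul_of_nonneg_right h1 hqp.le
    have e2 : p * (q / p) = q := by field_simp
    linarith
  · have hrp : (0:ℝ) < r - p := by linarith
    set v := q + (s - p) * ((r - q) / (r - p)) with hv
    have h1' : (r - v) * (r - p) = (r - q) * (r - s) := by
      rw [hv]; field_simp; ring
    rcases lt_or_eq_of_le hr1 with h | h
    · have h2 : 0 ≤ (r - q) * (r - s) := mul_nonneg (by linarith) (by linarith)
      nlinarith
    · have h2 : 0 < (r - q) * (r - s) := mul_pos (by linarith) (by rw [← h] at hs1; linarith)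
      nlinarith
  · linarith

lemma psi_strictMono {s t : ℝ} (hs0 : 0 ≤ s) (hst : s < t) (ht1 : t < 1) :
    psi p q r s < psi p q r t := by
  have hrp : (0:ℝ) < r - p := by linarith
  have hc : (0:ℝ) < (r - q) / (r - p) := div_pos (by linarith) hrp
  have hqp : (0:ℝ) < q / p := div_pos hq hp
  by_cases h1 : s ≤ p
  · by_cases h2 : t ≤ p
    · rw [psi, if_pos h1, psi, if_pos h2]
      exact mul_lt_mul_of_pos_right hst hqp
    · by_cases h3 : t ≤ r
      · rw [psi, if_pos h1, psi, if_neg h2, if_pos h3]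
        have e1 : s * (q / p) ≤ p * (q / p) := mul_le_mul_of_nonneg_right h1 hqp.le
        have e2 : p * (q / p) = q := by field_simp
        have e3 : 0 < (t - p) * ((r - q) / (r - p)) :=
          mul_pos (by push_neg at h2; linarith) hc
        linarith
      · rw [psi, if_pos h1, psi, if_neg h2, if_neg h3]
        have e1 : s * (q / p) ≤ p * (q / p) := mul_le_mul_of_nonneg_right h1 hqp.le
        have e2 : p * (q / p) = q := by field_simp
        push_neg at h3; linarith
  · by_cases h3 : t ≤ r
    · have h2 : s ≤ r := by linarith
      have h4 : ¬ t ≤ p := by push_neg at h1 ⊢; linarith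
      rw [psi, if_neg h1, if_pos h2, psi, if_neg h4, if_pos h3]
      have e1 : (s - p) * ((r - q) / (r - p)) < (t - p) * ((r - q) / (r - p)) :=
        mul_lt_mul_of_pos_right (by linarith) hc
      linarith
    · by_cases h2 : s ≤ r
      · have h4 : ¬ t ≤ p := by push_neg at h1 ⊢; linarith
        rw [psi, if_neg h1, if_pos h2, psi, if_neg h4, if_neg h3]
        have h1' : (q + (s - p) * ((r - q) / (r - p))) * (r - p)
            = q * (r - p) + (s - p) * (r - q) := by field_simp
        push_neg at h3
        nlinarith [mul_nonneg (show (0:ℝ) ≤ r - q by linarith)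
          (show (0:ℝ) ≤ r - s by linarith)]
      · have h4 : ¬ t ≤ p := by push_neg at h1 ⊢; linarith
        have h5 : ¬ t ≤ r := by push_neg at h2 ⊢; linarith
        rw [psi, if_neg h1, if_neg h2, psi, if_neg h4, if_neg h5]
        exact hst

lemma psi_inv {s : ℝ} (hs0 : 0 ≤ s) (hs1 : s < 1) : psi q p r (psi p q r s) = s := by
  have hrp : (0:ℝ) < r - p := by linarith
  have hrq : (0:ℝ) < r - q := by linarith
  by_cases h1 : s ≤ p
  · have hin : psi p q r s = s * (q / p) := by rw [psi, if_pos h1]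
    have e1 : s * (q / p) ≤ q := by
      have h := mul_le_mul_of_nonneg_right h1 (div_pos hq hp).le
      have e2 : p * (q / p) = q := by field_simp
      linarith
    rw [hin, psi, if_pos e1]
    field_simp
  · by_cases h2 : s ≤ r
    · have hin : psi p q r s = q + (s - p) * ((r - q) / (r - p)) := by
        rw [psi, if_neg h1, if_pos h2]
      push_neg at h1
      set v := q + (s - p) * ((r - q) / (r - p)) with hv
      have hvq : q < v := by
        have : 0 < (s - p) * ((r - q) / (r - p)) := mul_pos (by linarith) (div_pos hrq hrp)
        rw [hv]; linarith
      have hvr : v ≤ r := by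
        have h1' : (r - v) * (r - p) = (r - q) * (r - s) := by rw [hv]; field_simp; ring
        nlinarith [mul_nonneg hrq.le (show (0:ℝ) ≤ r - s by linarith)]
      rw [hin, psi, if_neg (by linarith), if_pos hvr, hv]
      field_simp
      ring
    · push_neg at h1 h2
      have hin : psi p q r s = s := by rw [psi, if_neg (by linarith), if_neg (by linarith)]
      rw [hin, psi, if_neg (by linarith), if_neg (by linarith)]

end psi

/-! ### bump functions -/

noncomputable def bumpFun (u p q r z : ℝ) : ℝ :=
  u + ⌊z - u⌋ + psi p q r (Int.fract (z - u))

section bump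

variable {u p q r : ℝ} (hp : 0 < p) (hq : 0 < q) (hpr : p < r) (hqr : q < r) (hr1 : r ≤ 1)

include hp hq hpr hqr hr1

set_option linter.unusedSectionVars false
set_option linter.unusedVariables false

omit hp hq hpr hqr hr1 in
lemma bumpFun_equivariant (z : ℝ) : bumpFun u p q r (z + 1) = bumpFun u p q r z + 1 := by
  rw [bumpFun, bumpFun, show z + 1 - u = (z - u) + 1 by ring, Int.floor_add_one,
    Int.fract_add_one]
  push_cast; ring

lemma bumpFun_strictMono : StrictMono (bumpFun u p q r) := by
  intro z z' h
  rw [bumpFun, bumpFun]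
  have hfl : ⌊z - u⌋ ≤ ⌊z' - u⌋ := Int.floor_le_floor (by linarith)
  rcases eq_or_lt_of_le hfl with hfe | hflt
  · have hfr : Int.fract (z - u) < Int.fract (z' - u) := by
      rw [Int.fract, Int.fract, ← hfe]
      have : z - u < z' - u := by linarith
      linarith
    have := psi_strictMono hp hq hpr hqr hr1 (Int.fract_nonneg (z - u)) hfr
      (Int.fract_lt_one (z' - u))
    rw [hfe]
    linarith
  · have h1 : psi p q r (Int.fract (z - u)) < 1 :=
      psi_lt_one hp hq hpr hqr hr1 (Int.fract_nonneg _) (Int.fract_lt_one _)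
    have h2 : 0 ≤ psi p q r (Int.fract (z' - u)) :=
      psi_nonneg hp hq hpr hqr hr1 (Int.fract_nonneg _)
    have h3 : (⌊z - u⌋ : ℝ) + 1 ≤ (⌊z' - u⌋ : ℝ) := by exact_mod_cast hflt
    linarith

lemma bumpFun_left_inv (z : ℝ) : bumpFun u q p r (bumpFun u p q r z) = z := by
  set s := Int.fract (z - u) with hs
  have hs0 : 0 ≤ s := Int.fract_nonneg _
  have hs1 : s < 1 := Int.fract_lt_one _
  set v := psi p q r s with hv
  have hv0 : 0 ≤ v := psi_nonneg hp hq hpr hqr hr1 hs0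
  have hv1 : v < 1 := psi_lt_one hp hq hpr hqr hr1 hs0 hs1
  have harg : bumpFun u p q r z - u = (⌊z - u⌋ : ℝ) + v := by
    rw [bumpFun]; ring
  rw [bumpFun, harg]
  have hfl : ⌊(⌊z - u⌋ : ℝ) + v⌋ = ⌊z - u⌋ := by
    rw [add_comm, Int.floor_add_intCast]
    have h0 : ⌊v⌋ = 0 := Int.floor_eq_zero_iff.mpr ⟨hv0, hv1⟩
    omega
  have hfr : Int.fract ((⌊z - u⌋ : ℝ) + v) = v := by
    rw [Int.fract_intCast_add]
    exact Int.fract_eq_self.mpr ⟨hv0, hv1⟩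
  rw [hfl, hfr, hv, psi_inv hp hq hpr hqr hr1 hs0 hs1]
  have := Int.floor_add_fract (z - u)
  rw [hs]; linarith

lemma bumpFun_fixes {D : Set ℝ} (hD : GridLike D) (hu : u ∈ D)
    (hgap : ∀ d ∈ D, ¬(u < d ∧ d < u + r)) {z : ℝ} (hz : z ∈ D) :
    bumpFun u p q r z = z := by
  set s := Int.fract (z - u) with hs
  have hs0 : 0 ≤ s := Int.fract_nonneg _
  have hs1 : s < 1 := Int.fract_lt_one _
  have hzs : z = u + (⌊z - u⌋ : ℝ) + s := by
    have := Int.floor_add_fract (z - u); rw [hs]; linarith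
  have husD : u + s ∈ D := by
    have h1 : z + ((-⌊z - u⌋ : ℤ) : ℝ) ∈ D := hD.int hz _
    have he : z + ((-⌊z - u⌋ : ℤ) : ℝ) = u + s := by push_cast; linarith
    rwa [he] at h1
  rcases eq_or_lt_of_le hs0 with h0 | hpos
  · rw [bumpFun, ← hs, ← h0, psi_zero hp hq hpr hqr hr1]
    linarith
  · have hng : ¬(u < u + s ∧ u + s < u + r) := hgap _ husD
    have hrs : r ≤ s := by
      by_contra hc
      push_neg at hc
      exact hng ⟨by linarith, by linarith⟩
    rw [bumpFun, ← hs, psi_ge hp hq hpr hqr hr1 hrs]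
    linarith

lemma bumpFun_maps (hpq1 : p < 1) : bumpFun u p q r (u + p) = u + q := by
  rw [bumpFun, show u + p - u = p by ring]
  have h1 : ⌊p⌋ = 0 := Int.floor_eq_zero_iff.mpr ⟨hp.le, hpq1⟩
  have h2 : Int.fract p = p := Int.fract_eq_self.mpr ⟨hp.le, hpq1⟩
  rw [h1, h2, psi_p hp hq hpr hqr hr1]
  simp

end bump

/-! ### existence of bumps -/

lemma exists_bump {D : Set ℝ} (hD : GridLike D) (x y : ℝ)
    (h : ∀ z ∈ Set.Icc (min x y) (max x y), z ∉ D) :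
    ∃ σ : ℝ → ℝ, IsTimedAutomorphism σ ∧ (∀ d ∈ D, σ d = d) ∧ σ x = y := by
  set m := min x y with hm
  set M := max x y with hM
  have hmM : m ≤ M := min_le_max
  have hmx : m ≤ x := min_le_left x y
  have hmy : m ≤ y := min_le_right x y
  have hxM : x ≤ M := le_max_left x y
  have hyM : y ≤ M := le_max_right x y
  have hmD : m ∉ D := h m ⟨le_rfl, hmM⟩
  have hMD : M ∉ D := h M ⟨hmM, le_rfl⟩
  -- the left grid point u
  obtain ⟨d, hdD, hd1, hd2⟩ := hD.dense m
  have hd2' : d < m := lt_of_le_of_ne hd2 (fun he => hmD (he ▸ hdD))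
  have hSfin : (D ∩ Set.Icc (m - 1) m).Finite := hD.finite (m - 1) m
  have hSne : (D ∩ Set.Icc (m - 1) m).Nonempty := ⟨d, hdD, by constructor <;> linarith⟩
  obtain ⟨u, huS, humax⟩ := Set.exists_max_image _ id hSfin hSne
  have huD : u ∈ D := huS.1
  have hum : u < m := lt_of_le_of_ne huS.2.2 (fun he => hmD (he ▸ huD))
  have hu1 : m - 1 ≤ u := huS.2.1
  -- the right grid point v₀
  obtain ⟨d', hd'D, hd'1, hd'2⟩ := hD.dense (M + 1)
  have hd'1' : M < d' := by linarith
  have hTfin : (D ∩ Set.Icc M (M + 1)).Finite := hD.finite M (M + 1)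
  have hTne : (D ∩ Set.Icc M (M + 1)).Nonempty := ⟨d', hd'D, by constructor <;> linarith⟩
  obtain ⟨v₀, hvT, hvmin⟩ := Set.exists_min_image _ id hTfin hTne
  have hv₀D : v₀ ∈ D := hvT.1
  have hMv : M < v₀ := lt_of_le_of_ne hvT.2.1 (fun he => hMD (he ▸ hv₀D))
  have hv₀M : v₀ ≤ M + 1 := hvT.2.2
  -- parameters
  set r := min (v₀ - u) 1 with hr
  set p := x - u with hp'
  set q := y - u with hq'
  have hu1D : u + 1 ∈ D := hD.add_one u huD
  have hu1M : M < u + 1 := by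
    by_contra hc
    push_neg at hc
    exact h (u + 1) ⟨by linarith, hc⟩ hu1D
  have hr1 : r ≤ 1 := min_le_right _ _
  have hrv : r ≤ v₀ - u := min_le_left _ _
  have hMur : M < u + r := by
    have : M - u < min (v₀ - u) 1 := lt_min (by linarith) (by linarith)
    rw [← hr] at this
    linarith
  have hp : 0 < p := by rw [hp']; linarith
  have hq : 0 < q := by rw [hq']; linarith
  have hpr : p < r := by rw [hp']; linarith
  have hqr : q < r := by rw [hq']; linarith
  have hp1 : p < 1 := by linarith
  have hgap : ∀ z ∈ D, ¬(u < z ∧ z < u + r) := by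
    rintro z hz ⟨h1, h2⟩
    have hzv : z < v₀ := by linarith
    rcases lt_or_ge z m with hzm | hzm
    · have : z ∈ D ∩ Set.Icc (m - 1) m := ⟨hz, by constructor <;> linarith⟩
      have := humax z this
      simp only [id] at this
      linarith
    · rcases le_or_gt z M with hzM | hzM
      · exact h z ⟨hzm, hzM⟩ hz
      · have : z ∈ D ∩ Set.Icc M (M + 1) := ⟨hz, by constructor <;> linarith⟩
        have := hvmin z this
        simp only [id] at this
        linarith
  refine ⟨bumpFun u p q r, ⟨?_, bumpFun_strictMono hp hq hpr hqr hr1, bumpFun_equivariant⟩,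
    fun d hd => bumpFun_fixes hp hq hpr hqr hr1 hD huD hgap hd, ?_⟩
  · constructor
    · intro a b hab
      have h1 := bumpFun_left_inv hp hq hpr hqr hr1 (u := u) a
      have h2 := bumpFun_left_inv hp hq hpr hqr hr1 (u := u) b
      rw [hab] at h1
      rw [h1] at h2
      exact h2
    · intro w
      refine ⟨bumpFun u q p r w, ?_⟩
      exact bumpFun_left_inv hq hp hqr hpr hr1 (u := u) w
  · have hx : x = u + p := by rw [hp']; ring
    have hy : y = u + q := by rw [hq']; ring
    rw [hx, hy]
    exact bumpFun_maps hp hq hpr hqr hr1 hp1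

lemma exists_bump' {D : Set ℝ} (hD : GridLike D) {x y : ℝ} (hxy : x ≤ y)
    (h : ∀ z ∈ Set.Icc x y, z ∉ D) :
    ∃ σ : ℝ → ℝ, IsTimedAutomorphism σ ∧ (∀ d ∈ D, σ d = d) ∧ σ x = y := by
  apply exists_bump hD
  rwa [min_eq_left hxy, max_eq_right hxy]

/-! ### transport -/

def GoodL (U V : Set ℝ) (l : List (ℝ → ℝ)) : Prop :=
  ∀ σ ∈ l, IsTimedAutomorphism σ ∧ ((∀ d ∈ U, σ d = d) ∨ (∀ d ∈ V, σ d = d))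

lemma GoodL.symm {U V : Set ℝ} {l : List (ℝ → ℝ)} (h : GoodL U V l) : GoodL V U l :=
  fun σ hσ => ⟨(h σ hσ).1, (h σ hσ).2.symm⟩

lemma GoodL.append {U V : Set ℝ} {l₁ l₂ : List (ℝ → ℝ)} (h₁ : GoodL U V l₁)
    (h₂ : GoodL U V l₂) : GoodL U V (l₁ ++ l₂) := by
  intro σ hσ
  rcases List.mem_append.mp hσ with h | h
  · exact h₁ σ h
  · exact h₂ σ h

lemma transport_base {U V : Set ℝ} (hU : GridLike U) (hV : GridLike V) {x y : ℝ}
    (hxy : x ≤ y) (hdisj : ∀ z ∈ Set.Icc x y, ¬(z ∈ U ∧ z ∈ V))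
    (hO : (U ∪ V) ∩ Set.Ioo x y = ∅) :
    ∃ l, GoodL U V l ∧ l.foldr (· ∘ ·) id x = y := by
  have hOz : ∀ z, x < z → z < y → z ∉ U ∪ V := by
    intro z h1 h2 hz
    have h3 : z ∈ (U ∪ V) ∩ Set.Ioo x y := ⟨hz, h1, h2⟩
    rw [hO] at h3
    exact h3
  rcases eq_or_lt_of_le hxy with rfl | hlt
  · exact ⟨[], by intro σ hσ; simp at hσ, rfl⟩
  · set m := (x + y) / 2 with hmdef
    have hxm : x < m := by rw [hmdef]; linarith
    have hmy : m < y := by rw [hmdef]; linarith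
    have hstep1 : ∃ σ : ℝ → ℝ, IsTimedAutomorphism σ ∧
        ((∀ d ∈ U, σ d = d) ∨ (∀ d ∈ V, σ d = d)) ∧ σ x = m := by
      by_cases hxU : x ∈ U
      · have hxV : x ∉ V := fun hc => hdisj x ⟨le_rfl, hxy⟩ ⟨hxU, hc⟩
        obtain ⟨σ, h1, h2, h3⟩ := exists_bump' hV hxm.le (fun z hz => by
          rcases eq_or_lt_of_le hz.1 with rfl | hlt'
          · exact hxV
          · exact fun hc => hOz z hlt' (lt_of_le_of_lt hz.2 hmy) (Or.inr hc))
        exact ⟨σ, h1, Or.inr h2, h3⟩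
      · obtain ⟨σ, h1, h2, h3⟩ := exists_bump' hU hxm.le (fun z hz => by
          rcases eq_or_lt_of_le hz.1 with rfl | hlt'
          · exact hxU
          · exact fun hc => hOz z hlt' (lt_of_le_of_lt hz.2 hmy) (Or.inl hc))
        exact ⟨σ, h1, Or.inl h2, h3⟩
    have hstep2 : ∃ σ : ℝ → ℝ, IsTimedAutomorphism σ ∧
        ((∀ d ∈ U, σ d = d) ∨ (∀ d ∈ V, σ d = d)) ∧ σ m = y := by
      by_cases hyU : y ∈ U
      · have hyV : y ∉ V := fun hc => hdisj y ⟨hxy, le_rfl⟩ ⟨hyU, hc⟩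
        obtain ⟨σ, h1, h2, h3⟩ := exists_bump' hV hmy.le (fun z hz => by
          rcases eq_or_lt_of_le hz.2 with rfl | hlt'
          · exact hyV
          · exact fun hc => hOz z (lt_of_lt_of_le hxm hz.1) hlt' (Or.inr hc))
        exact ⟨σ, h1, Or.inr h2, h3⟩
      · obtain ⟨σ, h1, h2, h3⟩ := exists_bump' hU hmy.le (fun z hz => by
          rcases eq_or_lt_of_le hz.2 with rfl | hlt'
          · exact hyU
          · exact fun hc => hOz z (lt_of_lt_of_le hxm hz.1) hlt' (Or.inl hc))
        exact ⟨σ, h1, Or.inl h2, h3⟩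
    obtain ⟨σa, ha1, ha2, ha3⟩ := hstep1
    obtain ⟨σb, hb1, hb2, hb3⟩ := hstep2
    refine ⟨[σb, σa], ?_, ?_⟩
    · intro σ hσ
      simp only [List.mem_cons, List.not_mem_nil, or_false] at hσ
      rcases hσ with rfl | rfl
      · exact ⟨hb1, hb2⟩
      · exact ⟨ha1, ha2⟩
    · show σb (σa (id x)) = y
      rw [id_eq, ha3, hb3]

lemma transport_step {n : ℕ} {U V : Set ℝ} (hU : GridLike U) (hV : GridLike V) {x y w : ℝ}
    (hdisj : ∀ z ∈ Set.Icc x y, ¬(z ∈ U ∧ z ∈ V))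
    (hwO : w ∈ (U ∪ V) ∩ Set.Ioo x y) (hwU : w ∈ U)
    (hwmin : ∀ z ∈ (U ∪ V) ∩ Set.Ioo x y, w ≤ z)
    (hcard : ((U ∪ V) ∩ Set.Ioo x y).ncard ≤ n + 1)
    (ih : ∀ x' y' : ℝ, x' ≤ y' → (∀ z ∈ Set.Icc x' y', ¬(z ∈ U ∧ z ∈ V)) →
      ((U ∪ V) ∩ Set.Ioo x' y').ncard ≤ n →
      ∃ l, GoodL U V l ∧ l.foldr (· ∘ ·) id x' = y') :
    ∃ l, GoodL U V l ∧ l.foldr (· ∘ ·) id x = y := by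
  have hxw : x < w := hwO.2.1
  have hwy : w < y := hwO.2.2
  have hxy : x ≤ y := by linarith
  have hwV : w ∉ V := fun hc => hdisj w ⟨hxw.le, hwy.le⟩ ⟨hwU, hc⟩
  have hOfin : ((U ∪ V) ∩ Set.Ioo x y).Finite := by
    apply ((hU.finite x y).union (hV.finite x y)).subset
    rintro z ⟨hz1, hz2⟩
    have hz3 : z ∈ Set.Icc x y := ⟨hz2.1.le, hz2.2.le⟩
    rcases hz1 with h | h
    · exact Or.inl ⟨h, hz3⟩
    · exact Or.inr ⟨h, hz3⟩
  have hOx : ∀ z, x < z → z < w → z ∉ U ∪ V := fun z h1 h2 hz =>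
    absurd (hwmin z ⟨hz, h1, h2.trans hwy⟩) (not_le.mpr h2)
  obtain ⟨l₀, x₁, hl₀, hfold₀, hxx₁, hx₁w, hx₁V⟩ :
      ∃ l₀ x₁, GoodL U V l₀ ∧ l₀.foldr (· ∘ ·) id x = x₁ ∧ x ≤ x₁ ∧ x₁ < w ∧ x₁ ∉ V := by
    by_cases hxV : x ∈ V
    · have hxU : x ∉ U := fun hc => hdisj x ⟨le_rfl, hxy⟩ ⟨hc, hxV⟩
      set m₀ := (x + w) / 2 with hm₀
      have h1 : x < m₀ := by rw [hm₀]; linarith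
      have h2 : m₀ < w := by rw [hm₀]; linarith
      obtain ⟨σ, hs1, hs2, hs3⟩ := exists_bump' hU h1.le (fun z hz => by
        rcases eq_or_lt_of_le hz.1 with rfl | hlt'
        · exact hxU
        · exact fun hc => hOx z hlt' (lt_of_le_of_lt hz.2 h2) (Or.inl hc))
      refine ⟨[σ], m₀, ?_, hs3, h1.le, h2, fun hc => hOx m₀ h1 h2 (Or.inr hc)⟩
      intro τ hτ
      simp only [List.mem_singleton] at hτ
      subst hτ
      exact ⟨hs1, Or.inl hs2⟩
    · exact ⟨[], x, by intro τ hτ; simp at hτ, rfl, le_rfl, hxw, hxV⟩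
  have hVgap : ∀ z, x₁ ≤ z → z ≤ w → z ∉ V := by
    intro z h1 h2 hz
    rcases eq_or_lt_of_le h1 with rfl | h1'
    · exact hx₁V hz
    · rcases eq_or_lt_of_le h2 with rfl | h2'
      · exact hwV hz
      · exact hOx z (lt_of_le_of_lt hxx₁ h1') h2' (Or.inr hz)
  rcases Set.eq_empty_or_nonempty (V ∩ Set.Ioc w y) with hT | hT
  · have hx₁y : x₁ ≤ y := by linarith
    obtain ⟨σ, hs1, hs2, hs3⟩ := exists_bump' hV hx₁y (fun z hz hzV => by
      rcases le_or_gt z w with h1 | h1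
      · exact hVgap z hz.1 h1 hzV
      · have h3 : z ∈ V ∩ Set.Ioc w y := ⟨hzV, h1, hz.2⟩
        rw [hT] at h3
        exact h3)
    refine ⟨[σ] ++ l₀, GoodL.append ?_ hl₀, ?_⟩
    · intro τ hτ
      simp only [List.mem_singleton] at hτ
      subst hτ
      exact ⟨hs1, Or.inr hs2⟩
    · have e : ([σ] ++ l₀).foldr (· ∘ ·) id x = σ (l₀.foldr (· ∘ ·) id x) := by
        rw [fold_append]; rfl
      rw [e, hfold₀, hs3]
  · have hTfin : (V ∩ Set.Ioc w y).Finite := (hV.finite w y).subset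
      (fun z hz => ⟨hz.1, hz.2.1.le, hz.2.2⟩)
    obtain ⟨b, hbT, hbmin⟩ := Set.exists_min_image _ id hTfin hT
    have hwb : w < b := hbT.2.1
    have hby : b ≤ y := hbT.2.2
    set m₁ := (w + b) / 2 with hm₁
    have hwm₁ : w < m₁ := by rw [hm₁]; linarith
    have hm₁b : m₁ < b := by rw [hm₁]; linarith
    have hx₁m₁ : x₁ ≤ m₁ := by linarith
    obtain ⟨σ, hs1, hs2, hs3⟩ := exists_bump' hV hx₁m₁ (fun z hz hzV => by
      rcases le_or_gt z w with h1 | h1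
      · exact hVgap z hz.1 h1 hzV
      · have hzT : z ∈ V ∩ Set.Ioc w y := ⟨hzV, h1, by linarith [hz.2]⟩
        have h4 := hbmin z hzT
        simp only [id_eq] at h4
        linarith [hz.2])
    have hm₁y : m₁ ≤ y := by linarith
    have hdisj' : ∀ z ∈ Set.Icc m₁ y, ¬(z ∈ U ∧ z ∈ V) := fun z hz =>
      hdisj z ⟨by linarith [hz.1], hz.2⟩
    have hsub : (U ∪ V) ∩ Set.Ioo m₁ y ⊆ ((U ∪ V) ∩ Set.Ioo x y) \ {w} := by
      rintro z ⟨hz1, hz2⟩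
      refine ⟨⟨hz1, by linarith [hz2.1], hz2.2⟩, ?_⟩
      simp only [Set.mem_singleton_iff]
      intro hzw
      rw [hzw] at hz2
      linarith [hz2.1]
    have hcard' : ((U ∪ V) ∩ Set.Ioo m₁ y).ncard ≤ n := by
      have h1 : ((U ∪ V) ∩ Set.Ioo m₁ y).ncard ≤ (((U ∪ V) ∩ Set.Ioo x y) \ {w}).ncard :=
        Set.ncard_le_ncard hsub hOfin.diff
      have h2 : (((U ∪ V) ∩ Set.Ioo x y) \ {w}).ncard
          = ((U ∪ V) ∩ Set.Ioo x y).ncard - 1 :=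
        Set.ncard_diff_singleton_of_mem hwO
      have h3 : 0 < ((U ∪ V) ∩ Set.Ioo x y).ncard :=
        (Set.ncard_pos hOfin).mpr ⟨w, hwO⟩
      omega
    obtain ⟨l₂, hl₂, hfold₂⟩ := ih m₁ y hm₁y hdisj' hcard'
    refine ⟨l₂ ++ [σ] ++ l₀, GoodL.append (GoodL.append hl₂ ?_) hl₀, ?_⟩
    · intro τ hτ
      simp only [List.mem_singleton] at hτ
      subst hτ
      exact ⟨hs1, Or.inr hs2⟩
    · have e : ((l₂ ++ [σ]) ++ l₀).foldr (· ∘ ·) id x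
          = l₂.foldr (· ∘ ·) id (σ (l₀.foldr (· ∘ ·) id x)) := by
        rw [fold_append, fold_append]; rfl
      rw [e, hfold₀, hs3, hfold₂]

lemma transport : ∀ n : ℕ, ∀ U V : Set ℝ, GridLike U → GridLike V → ∀ x y : ℝ, x ≤ y →
    (∀ z ∈ Set.Icc x y, ¬(z ∈ U ∧ z ∈ V)) → ((U ∪ V) ∩ Set.Ioo x y).ncard ≤ n →
    ∃ l, GoodL U V l ∧ l.foldr (· ∘ ·) id x = y := by
  intro n
  induction n with
  | zero =>
      intro U V hU hV x y hxy hdisj hcard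
      have hOfin : ((U ∪ V) ∩ Set.Ioo x y).Finite := by
        apply ((hU.finite x y).union (hV.finite x y)).subset
        rintro z ⟨hz1, hz2⟩
        have hz3 : z ∈ Set.Icc x y := ⟨hz2.1.le, hz2.2.le⟩
        rcases hz1 with h | h
        · exact Or.inl ⟨h, hz3⟩
        · exact Or.inr ⟨h, hz3⟩
      have hO : (U ∪ V) ∩ Set.Ioo x y = ∅ :=
        (Set.ncard_eq_zero hOfin).mp (Nat.le_zero.mp hcard)
      exact transport_base hU hV hxy hdisj hO
  | succ n ihn =>
      intro U V hU hV x y hxy hdisj hcard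
      rcases Set.eq_empty_or_nonempty ((U ∪ V) ∩ Set.Ioo x y) with hO | hO
      · exact transport_base hU hV hxy hdisj hO
      · have hOfin : ((U ∪ V) ∩ Set.Ioo x y).Finite := by
          apply ((hU.finite x y).union (hV.finite x y)).subset
          rintro z ⟨hz1, hz2⟩
          have hz3 : z ∈ Set.Icc x y := ⟨hz2.1.le, hz2.2.le⟩
          rcases hz1 with h | h
          · exact Or.inl ⟨h, hz3⟩
          · exact Or.inr ⟨h, hz3⟩
        obtain ⟨w, hwO, hwmin⟩ := Set.exists_min_image _ id hOfin hO
        simp only [id_eq] at hwmin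
        rcases hwO.1 with hwU | hwV
        · exact transport_step hU hV hdisj hwO hwU hwmin hcard
            (fun x' y' h1 h2 h3 => ihn U V hU hV x' y' h1 h2 h3)
        · have hVU : V ∪ U = U ∪ V := Set.union_comm V U
          have hdisj' : ∀ z ∈ Set.Icc x y, ¬(z ∈ V ∧ z ∈ U) :=
            fun z hz hc => hdisj z hz ⟨hc.2, hc.1⟩
          obtain ⟨l, hl, hfold⟩ := transport_step hV hU hdisj'
            (by rw [hVU]; exact hwO) hwV (by rw [hVU]; exact hwmin)
            (by rw [hVU]; exact hcard)
            (fun x' y' h1 h2 h3 => by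
              have h2' : ∀ z ∈ Set.Icc x' y', ¬(z ∈ U ∧ z ∈ V) :=
                fun z hz hc => h2 z hz ⟨hc.2, hc.1⟩
              have h3' : ((U ∪ V) ∩ Set.Ioo x' y').ncard ≤ n := by
                rw [← hVU]; exact h3
              obtain ⟨l, hl, hf⟩ := ihn U V hU hV x' y' h1 h2' h3'
              exact ⟨l, hl.symm, hf⟩)
          exact ⟨l, hl.symm, hfold⟩

lemma invert_list {U V : Set ℝ} :
    ∀ l : List (ℝ → ℝ), GoodL U V l →
    ∃ l', GoodL U V l' ∧ ∀ z, l'.foldr (· ∘ ·) id (l.foldr (· ∘ ·) id z) = z := by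
  intro l
  induction l with
  | nil => exact fun _ => ⟨[], by intro σ hσ; simp at hσ, fun z => rfl⟩
  | cons σ rest ih =>
      intro h
      have hσ := h σ (by simp)
      obtain ⟨l', hl', hinv⟩ := ih (fun τ hτ => h τ (by simp [hτ]))
      refine ⟨l' ++ [Function.invFun σ], GoodL.append hl' ?_, ?_⟩
      · intro τ hτ
        simp only [List.mem_singleton] at hτ
        subst hτ
        refine ⟨auto_invFun hσ.1, ?_⟩
        rcases hσ.2 with hfix | hfix
        · exact Or.inl (fun d hd => invFun_fix hσ.1 (hfix d hd))
        · exact Or.inr (fun d hd => invFun_fix hσ.1 (hfix d hd))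
      · intro z
        have e : (l' ++ [Function.invFun σ]).foldr (· ∘ ·) id
            ((σ :: rest).foldr (· ∘ ·) id z)
            = l'.foldr (· ∘ ·) id (Function.invFun σ (σ (rest.foldr (· ∘ ·) id z))) := by
          rw [fold_append]; rfl
        rw [e, Function.leftInverse_invFun hσ.1.1.1 _, hinv]

/-! ### decomposition of an automorphism fixing F'' -/

lemma level2 {F F'' : Set ℝ} {t : ℝ} (hFfin : F.Finite) (hF''fin : F''.Finite)
    (hFsub : F ⊆ Set.Ico (0:ℝ) 1) (hF''sub : F'' ⊆ Set.Ico (0:ℝ) 1)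
    (hFne : F.Nonempty) (ht : t ∈ Set.Ico (0:ℝ) 1) (htF : t ∉ F) (htF'' : t ∉ F'')
    {τ : ℝ → ℝ} (hτ : IsTimedAutomorphism τ) (hfix : ∀ s ∈ F'', τ s = s) :
    ∃ l : List (ℝ → ℝ),
      (∀ σ ∈ l, IsSTimedAutomorphism F σ ∨ IsSTimedAutomorphism (insert t F'') σ) ∧
      τ = l.foldr (· ∘ ·) id := by
  have hAsub : F ∪ F'' ⊆ Set.Ico (0:ℝ) 1 := Set.union_subset hFsub hF''sub
  have hBsub : insert t F'' ⊆ Set.Ico (0:ℝ) 1 := Set.insert_subset_iff.mpr ⟨ht, hF''sub⟩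
  have hAne : (F ∪ F'').Nonempty := hFne.mono Set.subset_union_left
  have hBne : (insert t F'').Nonempty := ⟨t, Set.mem_insert t F''⟩
  have hU : GridLike (grid (F ∪ F'')) := gridLike_grid (hFfin.union hF''fin) hAne hAsub
  have hV : GridLike (grid (insert t F'')) := gridLike_grid (hF''fin.insert t) hBne hBsub
  have hset : (F ∪ F'') ∩ insert t F'' = F'' := by
    ext s
    constructor
    · rintro ⟨h1, h2⟩
      rcases Set.mem_insert_iff.mp h2 with rfl | h3
      · rcases h1 with h | h
        · exact absurd h htF
        · exact absurd h htF''
      · exact h3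
    · exact fun h => ⟨Or.inr h, Set.mem_insert_of_mem _ h⟩
  have hUV' : grid (F ∪ F'') ∩ grid (insert t F'') = grid F'' := by
    rw [grid_inter hAsub hBsub, hset]
  have hfixg : ∀ s ∈ grid F'', τ s = s := fixes_grid hτ hfix
  have hng : t ∉ grid F'' := not_mem_grid hF''sub ht htF''
  -- transport t to τ t
  obtain ⟨l₁, hl₁, hf₁⟩ :
      ∃ l₁, GoodL (grid (F ∪ F'')) (grid (insert t F'')) l₁ ∧
        l₁.foldr (· ∘ ·) id t = τ t := by
    rcases le_total t (τ t) with h | h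
    · have hdisj1 : ∀ z ∈ Set.Icc t (τ t),
          ¬(z ∈ grid (F ∪ F'') ∧ z ∈ grid (insert t F'')) := by
        intro z hz hc
        have hzg : z ∈ grid F'' := by rw [← hUV']; exact ⟨hc.1, hc.2⟩
        have hz2 : τ z = z := hfixg z hzg
        have hne : z ≠ t := fun he => hng (he ▸ hzg)
        have hlt : t < z := lt_of_le_of_ne hz.1 (Ne.symm hne)
        have h5 := hτ.2.1 hlt
        rw [hz2] at h5
        linarith [hz.2]
      exact transport _ _ _ hU hV t (τ t) h hdisj1 le_rfl
    · have hdisj2 : ∀ z ∈ Set.Icc (τ t) t,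
          ¬(z ∈ grid (F ∪ F'') ∧ z ∈ grid (insert t F'')) := by
        intro z hz hc
        have hzg : z ∈ grid F'' := by rw [← hUV']; exact ⟨hc.1, hc.2⟩
        have hz2 : τ z = z := hfixg z hzg
        have hne : z ≠ t := fun he => hng (he ▸ hzg)
        have hlt : z < t := lt_of_le_of_ne hz.2 hne
        have h5 := hτ.2.1 hlt
        rw [hz2] at h5
        linarith [hz.1]
      obtain ⟨l, hl, hf⟩ := transport _ _ _ hU hV (τ t) t h hdisj2 le_rfl
      obtain ⟨l', hl', hinv⟩ := invert_list l hl
      refine ⟨l', hl', ?_⟩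
      have h6 := hinv (τ t)
      rw [hf] at h6
      exact h6
  have hg : IsTimedAutomorphism (l₁.foldr (· ∘ ·) id) :=
    fold_auto l₁ (fun σ hσ => (hl₁ σ hσ).1)
  have hgfix : ∀ s ∈ grid F'', l₁.foldr (· ∘ ·) id s = s := by
    apply fold_fixes
    intro σ hσ
    rcases (hl₁ σ hσ).2 with hfixU | hfixV
    · exact fun s hs => hfixU s (grid_mono Set.subset_union_right hs)
    · exact fun s hs => hfixV s (grid_mono (Set.subset_insert t F'') hs)
  set g := l₁.foldr (· ∘ ·) id with hgdef
  set ρ := Function.invFun g ∘ τ with hρdef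
  have hρ : IsTimedAutomorphism ρ := auto_comp (auto_invFun hg) hτ
  have hρfix : ∀ s ∈ insert t F'', ρ s = s := by
    intro s hs
    rcases Set.mem_insert_iff.mp hs with rfl | hs'
    · show Function.invFun g (τ s) = s
      rw [← hf₁]
      exact Function.leftInverse_invFun hg.1.1 s
    · show Function.invFun g (τ s) = s
      rw [hfix s hs']
      exact invFun_fix hg (hgfix s (subset_grid _ hs'))
  refine ⟨l₁ ++ [ρ], ?_, ?_⟩
  · intro σ hσ
    rcases List.mem_append.mp hσ with h' | h'
    · rcases (hl₁ σ h').2 with hfixU | hfixV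
      · exact Or.inl ⟨(hl₁ σ h').1, fun s hs => hfixU s (subset_grid _ (Set.mem_union_left _ hs))⟩
      · exact Or.inr ⟨(hl₁ σ h').1, fun s hs => hfixV s (subset_grid _ hs)⟩
    · simp only [List.mem_singleton] at h'
      subst h'
      exact Or.inr ⟨hρ, hρfix⟩
  · funext z
    have e : (l₁ ++ [ρ]).foldr (· ∘ ·) id z = g (ρ z) := by
      rw [fold_append]; rfl
    rw [e]
    show τ z = g (Function.invFun g (τ z))
    exact (Function.rightInverse_invFun hg.1.2 (τ z)).symm

/-! ### the main induction -/

lemma level1_sub {F F' : Set ℝ} (hsub : F' ⊆ F) {π : ℝ → ℝ}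
    (hπ : IsSTimedAutomorphism (F ∩ F') π) :
    ∃ l : List (ℝ → ℝ), (∀ σ ∈ l, IsSTimedAutomorphism F σ ∨ IsSTimedAutomorphism F' σ) ∧
      π = l.foldr (· ∘ ·) id := by
  refine ⟨[π], ?_, rfl⟩
  intro σ hσ
  simp only [List.mem_singleton] at hσ
  subst hσ
  exact Or.inr ⟨hπ.1, fun s hs => hπ.2 s ⟨hsub hs, hs⟩⟩

lemma level1 {F : Set ℝ} (hFfin : F.Finite) (hFsub : F ⊆ Set.Ico (0:ℝ) 1)
    (hFne : F.Nonempty) :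
    ∀ n : ℕ, ∀ F' : Set ℝ, F'.Finite → F' ⊆ Set.Ico (0:ℝ) 1 → (F' \ F).ncard ≤ n →
    ∀ π, IsSTimedAutomorphism (F ∩ F') π →
    ∃ l : List (ℝ → ℝ), (∀ σ ∈ l, IsSTimedAutomorphism F σ ∨ IsSTimedAutomorphism F' σ) ∧
      π = l.foldr (· ∘ ·) id := by
  intro n
  induction n with
  | zero =>
      intro F' hF'fin hF'sub hcard π hπ
      have he : F' \ F = ∅ := (Set.ncard_eq_zero (hF'fin.diff (t := F))).mp (Nat.le_zero.mp hcard)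
      refine level1_sub (fun s hs => ?_) hπ
      by_contra hc
      have h2 : s ∈ F' \ F := ⟨hs, hc⟩
      rw [he] at h2
      exact h2
  | succ n ihn =>
      intro F' hF'fin hF'sub hcard π hπ
      rcases Set.eq_empty_or_nonempty (F' \ F) with hdiff | hdiff
      · refine level1_sub (fun s hs => ?_) hπ
        by_contra hc
        have h2 : s ∈ F' \ F := ⟨hs, hc⟩
        rw [hdiff] at h2
        exact h2
      · obtain ⟨t, htF', htF⟩ := hdiff
        set F'' := F' \ {t} with hF''def
        have hF''fin : F''.Finite := hF'fin.diff
        have hF''sub : F'' ⊆ Set.Ico (0:ℝ) 1 := fun s hs => hF'sub hs.1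
        have htF'' : t ∉ F'' := fun hc => hc.2 rfl
        have hins : insert t F'' = F' := by
          rw [hF''def, Set.insert_diff_singleton]
          exact Set.insert_eq_of_mem htF'
        have hcard'' : (F'' \ F).ncard ≤ n := by
          have hsub2 : F'' \ F ⊆ (F' \ F) \ {t} := fun s hs => ⟨⟨hs.1.1, hs.2⟩, hs.1.2⟩
          have hfin : (F' \ F).Finite := hF'fin.diff
          have h1 : (F'' \ F).ncard ≤ ((F' \ F) \ {t}).ncard :=
            Set.ncard_le_ncard hsub2 hfin.diff
          have h2 : ((F' \ F) \ {t}).ncard = (F' \ F).ncard - 1 :=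
            Set.ncard_diff_singleton_of_mem ⟨htF', htF⟩
          have h3 : 0 < (F' \ F).ncard := (Set.ncard_pos hfin).mpr ⟨t, htF', htF⟩
          omega
        have hFF'' : F ∩ F'' = F ∩ F' := by
          ext s
          constructor
          · rintro ⟨h1, h2⟩
            exact ⟨h1, h2.1⟩
          · rintro ⟨h1, h2⟩
            refine ⟨h1, h2, fun hc => ?_⟩
            rw [Set.mem_singleton_iff] at hc
            rw [hc] at h1
            exact htF h1
        have hπ'' : IsSTimedAutomorphism (F ∩ F'') π :=
          ⟨hπ.1, fun s hs => hπ.2 s (hFF'' ▸ hs)⟩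
        obtain ⟨l₀, hl₀, hfold₀⟩ := ihn F'' hF''fin hF''sub hcard'' π hπ''
        have ht01 : t ∈ Set.Ico (0:ℝ) 1 := hF'sub htF'
        have hrepl : ∀ lw : List (ℝ → ℝ),
            (∀ σ ∈ lw, IsSTimedAutomorphism F σ ∨ IsSTimedAutomorphism F'' σ) →
            ∃ l : List (ℝ → ℝ),
              (∀ σ ∈ l, IsSTimedAutomorphism F σ ∨ IsSTimedAutomorphism F' σ) ∧
              l.foldr (· ∘ ·) id = lw.foldr (· ∘ ·) id := by
          intro lw
          induction lw with
          | nil => exact fun _ => ⟨[], by intro σ hσ; simp at hσ, rfl⟩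
          | cons σ rest ihl =>
              intro h
              obtain ⟨lr, hlr, hfr⟩ := ihl (fun υ hυ => h υ (by simp [hυ]))
              rcases h σ (by simp) with hFσ | hF''σ
              · refine ⟨σ :: lr, ?_, ?_⟩
                · intro υ hυ
                  rcases List.mem_cons.mp hυ with rfl | hυ'
                  · exact Or.inl hFσ
                  · exact hlr υ hυ'
                · simp only [List.foldr_cons]
                  rw [hfr]
              · obtain ⟨l₂, hl₂, hσeq⟩ := level2 hFfin hF''fin hFsub hF''sub hFne ht01 htF
                  htF'' hF''σ.1 hF''σ.2
                rw [hins] at hl₂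
                refine ⟨l₂ ++ lr, ?_, ?_⟩
                · intro υ hυ
                  rcases List.mem_append.mp hυ with h' | h'
                  · exact hl₂ υ h'
                  · exact hlr υ h'
                · rw [fold_append, hfr]
                  simp only [List.foldr_cons]
                  rw [← hσeq]
        obtain ⟨l, hl, hfl⟩ := hrepl l₀ hl₀
        refine ⟨l, hl, ?_⟩
        rw [hfold₀]
        exact hfl.symm

end TADecomp

/-- Every `(F ∩ F')`-timed automorphism is a finite composition of automorphisms, each
of which is either an `F`-timed automorphism or an `F'`-timed automorphism. -/
theorem decomposition_of_inter_automorphism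
    (F F' : Set ℝ) (hF : F.Finite) (hF' : F'.Finite)
    (hFsub : F ⊆ Set.Ico (0 : ℝ) 1) (hF'sub : F' ⊆ Set.Ico (0 : ℝ) 1) :
    ∀ π, IsSTimedAutomorphism (F ∩ F') π →
      ∃ l : List (ℝ → ℝ),
        (∀ σ ∈ l, IsSTimedAutomorphism F σ ∨ IsSTimedAutomorphism F' σ) ∧
        π = l.foldr (· ∘ ·) id := by
  intro π hπ
  rcases Set.eq_empty_or_nonempty F with rfl | hFne
  · refine ⟨[π], ?_, rfl⟩
    intro σ hσ
    simp only [List.mem_singleton] at hσ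
    subst hσ
    exact Or.inl ⟨hπ.1, fun s hs => absurd hs (Set.notMem_empty s)⟩
  · exact TADecomp.level1 hF hFsub hFne ((F' \ F).ncard) F' hF' hF'sub le_rfl π hπ
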